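/- Let σ be an automorphism of F_q of order m, let λ ∈ F_q^* satisfy σ(λ) = λ, and let n be a positive integer with gcd(m, n) = 1. If C ⊆ F_q^n is a skew (σ,λ)-constacyclic code, then C is a λ-constacyclic code, i.e., T_λ(c) ∈ C for every c ∈ C. -/

import Mathlib

/-- The skew constacyclic shift `T_{σ,λ}` on `F^n`:
`T_{σ,λ}(c)_0 = λ·σ(c_{n−1})` and `T_{σ,λ}(c)_i = σ(c_{i−1})` for `1 ≤ i ≤ n−1`.
(Here `i - 1` is subtraction in `Fin n`, so `0 - 1 = n - 1`.) -/
def skewShift {F : Type*} [Field F] {n : ℕ} [NeZero n] (σ : F → F) (lam : F)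
    (c : Fin n → F) : Fin n → F :=
  fun i => if i = 0 then lam * σ (c (i - 1)) else σ (c (i - 1))

open Fin.NatCast

lemma ringEquiv_pow_apply {F : Type*} [Field F] (σ : F ≃+* F) (k : ℕ) :
    ∀ x : F, (σ ^ k) x = (⇑σ)^[k] x := by
  induction k with
  | zero => intro x; rfl
  | succ k ih =>
    intro x
    rw [pow_succ, Function.iterate_succ_apply]
    exact ih (σ x)

lemma iter_map_mul {F : Type*} [Field F] (σ : F ≃+* F) (k : ℕ) (x y : F) :
    (⇑σ)^[k] (x * y) = (⇑σ)^[k] x * (⇑σ)^[k] y := by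
  rw [← ringEquiv_pow_apply, ← ringEquiv_pow_apply, ← ringEquiv_pow_apply, map_mul]

lemma iter_fix {F : Type*} [Field F] (σ : F ≃+* F) (lam : F) (hfix : σ lam = lam) :
    ∀ j : ℕ, (⇑σ)^[j] lam = lam := by
  intro j
  induction j with
  | zero => rfl
  | succ j ih => rw [Function.iterate_succ_apply', ih, hfix]

/-- Formula for iterating the skew shift `j ≤ n` times. -/
lemma skewShift_iterate_formula {F : Type*} [Field F] {n : ℕ} [NeZero n]
    (σ : F ≃+* F) (lam : F) (hfix : σ lam = lam) (c : Fin n → F) :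
    ∀ j : ℕ, j ≤ n → (skewShift (⇑σ) lam)^[j] c =
      fun i : Fin n => if (i : ℕ) < j then lam * (⇑σ)^[j] (c (i - (j : Fin n)))
        else (⇑σ)^[j] (c (i - (j : Fin n))) := by
  obtain ⟨N, rfl⟩ : ∃ N, n = N + 1 := ⟨n - 1, by have := NeZero.pos n; omega⟩
  intro j
  induction j with
  | zero =>
    intro _
    funext i
    simp
  | succ j ih =>
    intro hj
    have hjn : j < N + 1 := lt_of_lt_of_le (Nat.lt_succ_self j) hj
    rw [Function.iterate_succ_apply', ih (le_of_lt hjn)]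
    funext i
    have hsub : i - ((j + 1 : ℕ) : Fin (N + 1)) = (i - 1) - (j : Fin (N + 1)) := by
      push_cast
      abel
    simp only [skewShift]
    by_cases hi : i = 0
    · subst hi
      have h0 : ((0 - 1 : Fin (N + 1)) : ℕ) = N := by
        rw [Fin.coe_sub_one, if_pos rfl]
      have h0' : ¬ (((0 - 1 : Fin (N + 1)) : ℕ) < j) := by omega
      rw [if_pos rfl, if_neg h0', if_pos (by simp [Nat.succ_pos j] : ((0 : Fin (N+1)) : ℕ) < j + 1),
        ← Function.iterate_succ_apply' (⇑σ) j, hsub]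
    · have hival : 1 ≤ (i : ℕ) := Nat.one_le_iff_ne_zero.mpr (fun h => hi (Fin.ext h))
      have hcoe : ((i - 1 : Fin (N + 1)) : ℕ) = (i : ℕ) - 1 := by
        rw [Fin.coe_sub_one, if_neg hi]
      have hiff : (((i - 1 : Fin (N + 1)) : ℕ) < j) ↔ ((i : ℕ) < j + 1) := by
        rw [hcoe]; omega
      rw [if_neg hi]
      by_cases hlt : (i : ℕ) < j + 1
      · rw [if_pos hlt, if_pos (hiff.mpr hlt), map_mul, hfix,
          ← Function.iterate_succ_apply' (⇑σ) j, hsub]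
      · rw [if_neg hlt, if_neg (fun h => hlt (hiff.mp h)),
          ← Function.iterate_succ_apply' (⇑σ) j, hsub]

/-- Iterating the skew shift `n` times is `lam • (σ^[n] ∘ c)`. -/
lemma skewShift_iterate_n {F : Type*} [Field F] {n : ℕ} [NeZero n]
    (σ : F ≃+* F) (lam : F) (hfix : σ lam = lam) (c : Fin n → F) :
    (skewShift (⇑σ) lam)^[n] c = lam • ((⇑σ)^[n] ∘ c) := by
  rw [skewShift_iterate_formula σ lam hfix c n (le_refl n)]
  funext i
  have h1 : (i : ℕ) < n := i.isLt
  have h2 : ((n : ℕ) : Fin n) = 0 := by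
    ext
    simp [Nat.mod_self]
  simp [h1, h2, smul_eq_mul]

/-- Iterating the skew shift `a*n` times is `lam^a • (σ^[a*n] ∘ c)`. -/
lemma skewShift_iterate_mul {F : Type*} [Field F] {n : ℕ} [NeZero n]
    (σ : F ≃+* F) (lam : F) (hfix : σ lam = lam) (a : ℕ) (c : Fin n → F) :
    (skewShift (⇑σ) lam)^[a * n] c = lam ^ a • ((⇑σ)^[a * n] ∘ c) := by
  induction a with
  | zero => simp
  | succ a ih =>
    have h : (a + 1) * n = n + a * n := by ring
    rw [h, Function.iterate_add_apply, skewShift_iterate_n σ lam hfix, ih]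
    funext i
    simp only [Function.comp_apply, Pi.smul_apply, smul_eq_mul]
    rw [iter_map_mul]
    have hfa : (⇑σ)^[n] (lam ^ a) = lam ^ a :=
      iter_fix σ (lam ^ a) (by rw [map_pow, hfix]) n
    rw [hfa, ← Function.iterate_add_apply (⇑σ) n (a * n) (c i)]
    ring

/-- Let `σ` be an automorphism of `F_q` of order `m`, let `λ ∈ F_q^*`
with `σ(λ) = λ`, and let `n` be a positive integer with `gcd(m, n) = 1`.
If `C ⊆ F_q^n` is a skew `(σ,λ)`-constacyclic code, then `C` is a
`λ`-constacyclic code, i.e. `T_λ(c) ∈ C` for every `c ∈ C`. -/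
theorem stmt_6 (F : Type*) [Field F] [Fintype F]
    (σ : F ≃+* F) (m : ℕ) (hm : orderOf σ = m)
    (lam : F) (hlam : lam ≠ 0) (hfix : σ lam = lam)
    (n : ℕ) [NeZero n] (hmn : Nat.gcd m n = 1)
    (C : Submodule F (Fin n → F))
    (hC : ∀ c ∈ C, skewShift (⇑σ) lam c ∈ C) :
    ∀ c ∈ C, skewShift (id : F → F) lam c ∈ C := by
  intro c hc
  by_cases hn1 : n = 1
  · subst hn1
    have h1 : skewShift (id : F → F) lam c = lam • c := by
      funext i
      have hi : i = 0 := Subsingleton.elim i 0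
      subst hi
      have h01 : (0 - 1 : Fin 1) = 0 := Subsingleton.elim _ _
      simp [skewShift, h01, smul_eq_mul]
    rw [h1]
    exact C.smul_mem lam hc
  · -- n ≥ 2
    have hn2 : 2 ≤ n := by
      have := NeZero.pos n
      omega
    have hcop : Nat.Coprime n m := (Nat.coprime_iff_gcd_eq_one.mpr hmn).symm
    obtain ⟨k, hk1, hk2⟩ := Nat.chineseRemainder hcop 1 0
    have hk1' : k % n = 1 := by
      have : (1 : ℕ) % n = 1 := Nat.mod_eq_of_lt (by omega)
      rw [Nat.ModEq] at hk1
      omega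
    have hk2' : m ∣ k := (Nat.modEq_zero_iff_dvd).mp hk2
    set t := k / n with ht
    have hk : k = t * n + 1 := by
      conv_lhs => rw [← Nat.div_add_mod k n]
      rw [hk1', Nat.mul_comm]
    -- σ^[k] = id
    have hσk : ∀ x : F, (⇑σ)^[k] x = x := by
      intro x
      rw [← ringEquiv_pow_apply]
      have h1 : σ ^ k = 1 := orderOf_dvd_iff_pow_eq_one.mp (hm ▸ hk2')
      rw [h1]
      rfl
    -- all iterates of the skew shift stay in C
    have hmem : ∀ j : ℕ, (skewShift (⇑σ) lam)^[j] c ∈ C := by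
      intro j
      induction j with
      | zero => exact hc
      | succ j ih =>
        rw [Function.iterate_succ_apply']
        exact hC _ ih
    -- key identity
    have hkey : (skewShift (⇑σ) lam)^[k] c = lam ^ t • skewShift (id : F → F) lam c := by
      rw [hk, Function.iterate_add_apply, Function.iterate_one,
        skewShift_iterate_mul σ lam hfix t (skewShift (⇑σ) lam c)]
      funext i
      simp only [Pi.smul_apply, Function.comp_apply, smul_eq_mul]
      congr 1
      simp only [skewShift, id_eq]
      by_cases hi : i = 0
      · rw [if_pos hi, if_pos hi, iter_map_mul, iter_fix σ lam hfix,
          Function.iterate_succ_apply (⇑σ) (t * n) (c (i - 1)) |>.symm]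
        rw [Nat.succ_eq_add_one, ← hk, hσk]
      · rw [if_neg hi, if_neg hi,
          Function.iterate_succ_apply (⇑σ) (t * n) (c (i - 1)) |>.symm]
        rw [Nat.succ_eq_add_one, ← hk, hσk]
    have hfinal := C.smul_mem ((lam ^ t)⁻¹) (hmem k)
    rw [hkey, smul_smul, inv_mul_cancel₀ (pow_ne_zero t hlam), one_smul] at hfinal
    exact hfinal
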